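/- Let χ be an (r+1)-signotope on [n] with block partition [n] = C₁ ∪ ... ∪ C_r. Then the induced grid orientation O_χ on C₁ × ... × C_r is a unique sink orientation: every subgrid C₁' × ... × C_r' (with ∅ ≠ C_i' ⊆ C_i) contains exactly one sink. -/

import Mathlib

set_option maxHeartbeats 1000000


/-- Number of sign changes in a list of signs (`true` = `+`, `false` = `-`). -/
def signChanges (l : List Bool) : Nat :=
  (l.zip l.tail).countP (fun p => p.1 != p.2)

/-- The sequence of signs obtained from the set `A` by applying `χ` to `A` minus each of its
elements, deleted in increasing order. -/
def delSeq (chi : Finset Nat -> Bool) (A : Finset Nat) : List Bool :=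
  (List.range A.card).map (fun i => chi (((A.sort (fun a b => a <= b)).eraseIdx i).toFinset))

/-- `chi` is an `r`-signotope on ground set `S`: it is a sign map on `r`-subsets such that for
every `(r+1)`-subset `A ⊆ S` the sign sequence `delSeq chi A` has at most one sign change. -/
def IsSignotopeOn (r : Nat) (S : Finset Nat) (chi : Finset Nat -> Bool) : Prop :=
  forall A : Finset Nat, A ⊆ S -> A.card = r + 1 -> signChanges (delSeq chi A) <= 1
/-- `C 0, ..., C (r-1)` is a block partition of `[n] = {1, ..., n}`. -/
def IsBlockPartition (n r : Nat) (C : Fin r -> Finset Nat) : Prop :=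
  Finset.univ.biUnion C = Finset.Icc 1 n ∧
    ∀ i j : Fin r, i < j -> ∀ c ∈ C i, ∀ c' ∈ C j, c < c'

/-- The orientation `O_χ` induced by a block signotope: `blockDir chi C v w` means that both `v`
and `w` are grid vertices (of the grid `C 0 × ⋯ × C (r-1)`), they differ in exactly one
coordinate `i`, and the edge between them is directed from `v` to `w` according to the sign of
`chi` on the `(r+1)`-set consisting of all entries of `v` together with `w i`. -/
def blockDir {r : Nat} (chi : Finset Nat -> Bool) (C : Fin r -> Finset Nat)
    (v w : Fin r -> Nat) : Prop :=
  (∀ j, v j ∈ C j) ∧ (∀ j, w j ∈ C j) ∧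
    ∃ i, (∀ j, j ≠ i -> v j = w j) ∧
      ((v i < w i ∧ chi (insert (w i) (Finset.image v Finset.univ)) = true) ∨
       (w i < v i ∧ chi (insert (w i) (Finset.image v Finset.univ)) = false))

/-- Two tuples are adjacent in the grid iff they differ in exactly one coordinate. -/
def NatAdj {r : Nat} (v w : Fin r -> Nat) : Prop :=
  ∃ i, v i ≠ w i ∧ ∀ j, j ≠ i -> v j = w j

/-- `v` is a sink of the subgrid `S` of `O_χ`: all edges of the subgrid at `v` are incoming. -/
def IsBlockSink {r : Nat} (chi : Finset Nat -> Bool) (C : Fin r -> Finset Nat)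
    (S : Fin r -> Finset Nat) (v : Fin r -> Nat) : Prop :=
  (∀ i, v i ∈ S i) ∧ ∀ w, (∀ i, w i ∈ S i) -> NatAdj v w -> blockDir chi C w v

lemma signChanges_nil : signChanges [] = 0 := rfl
lemma signChanges_single (a : Bool) : signChanges [a] = 0 := rfl
lemma signChanges_cons_cons (a b : Bool) (l : List Bool) :
    signChanges (a :: b :: l) = (if a = b then 0 else 1) + signChanges (b :: l) := by
  simp only [signChanges, List.tail, List.zip_cons_cons, List.countP_cons]
  rcases eq_or_ne a b with h | h <;> simp [h] <;> omega

lemma signChanges_cons_le (a : Bool) (l : List Bool) :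
    signChanges l ≤ signChanges (a :: l) := by
  cases l with
  | nil => simp [signChanges]
  | cons b t => rw [signChanges_cons_cons]; omega

lemma signChanges_cons_cons_le (x a : Bool) (l : List Bool) :
    signChanges (x :: l) ≤ (if x = a then 0 else 1) + signChanges (a :: l) := by
  cases l with
  | nil =>
    simp only [signChanges_single]
    split <;> omega
  | cons b t =>
    rw [signChanges_cons_cons, signChanges_cons_cons]
    rcases eq_or_ne x a with h | h <;> rcases eq_or_ne a b with h2 | h2 <;>
      rcases eq_or_ne x b with h3 | h3 <;> simp only [h, h2, h3, if_true, if_false] <;>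
      first
        | omega
        | (exfalso; subst h; subst h2; exact h3 rfl)
        | (exfalso; apply h2; subst h; subst h3; rfl)
        | (exfalso; apply h; subst h2; subst h3; rfl)
        | (simp_all)

lemma signChanges_sublist_cons {l₁ l₂ : List Bool} (h : List.Sublist l₁ l₂) :
    ∀ x : Bool, signChanges (x :: l₁) ≤ signChanges (x :: l₂) := by
  induction h with
  | slnil => intro x; exact le_refl _
  | @cons l₁' l₂' a h ih =>
    intro x
    have h1 : signChanges (x :: l₁') ≤ (if x = a then 0 else 1) + signChanges (a :: l₂') :=
      le_trans (ih x) (signChanges_cons_cons_le x a l₂')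
    rw [signChanges_cons_cons]
    exact h1
  | @cons_cons l₁' l₂' a h ih =>
    intro x
    rw [signChanges_cons_cons, signChanges_cons_cons]
    exact Nat.add_le_add_left (ih a) _

lemma signChanges_sublist {l₁ l₂ : List Bool} (h : List.Sublist l₁ l₂) :
    signChanges l₁ ≤ signChanges l₂ := by
  induction h with
  | slnil => exact le_refl _
  | @cons l₁' l₂' a h ih => exact le_trans ih (signChanges_cons_le a _)
  | @cons_cons l₁' l₂' a h ih => exact signChanges_sublist_cons h a

-- Part 2: delSeq as a map over the sorted list, and subsequence extraction

lemma toFinset_eraseIdx {L : List Nat} (hL : L.Nodup) :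
    ∀ i : Nat, ∀ h : i < L.length, (L.eraseIdx i).toFinset = L.toFinset.erase L[i] := by
  induction L with
  | nil => intro i h; simp at h
  | cons a t ih =>
    intro i h
    cases i with
    | zero =>
      simp only [List.eraseIdx, List.toFinset_cons, List.getElem_cons_zero]
      rw [Finset.erase_insert]
      simp only [List.mem_toFinset]
      exact (List.nodup_cons.mp hL).1
    | succ i =>
      simp only [List.eraseIdx, List.toFinset_cons, List.getElem_cons_succ]
      rw [ih (List.nodup_cons.mp hL).2 i (by simpa using h)]
      rw [Finset.erase_insert_of_ne]
      intro hai
      exact (List.nodup_cons.mp hL).1 (hai ▸ List.getElem_mem _)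

lemma delSeq_eq_map (chi : Finset Nat -> Bool) (A : Finset Nat) :
    delSeq chi A = (A.sort (fun a b => a <= b)).map (fun a => chi (A.erase a)) := by
  set L := A.sort (fun a b => a <= b) with hLdef
  have hlen : L.length = A.card := Finset.length_sort _
  apply List.ext_getElem
  · simp [delSeq, hlen]
  · intro i h1 h2
    simp only [delSeq, List.getElem_map, List.getElem_range]
    congr 1
    rw [toFinset_eraseIdx (Finset.sort_nodup A _) i (by simpa [delSeq, hlen] using h1)]
    rw [Finset.sort_toFinset]

lemma sort_sublist_of_subset {A B : Finset Nat} (h : B ⊆ A) :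
    List.Sublist (B.sort (fun a b => a <= b)) (A.sort (fun a b => a <= b)) := by
  haveI : IsAntisymm Nat (fun a b => a <= b) := ⟨fun a b h h' => Nat.le_antisymm h h'⟩
  have hsub : List.Subperm (B.sort (fun a b => a <= b)) (A.sort (fun a b => a <= b)) := by
    apply List.Nodup.subperm (Finset.sort_nodup B _)
    intro x hx
    rw [Finset.mem_sort] at hx
    rw [Finset.mem_sort]
    exact h hx
  exact List.sublist_of_subperm_of_pairwise (r := fun a b => a <= b) hsub
    (Finset.pairwise_sort B _) (Finset.pairwise_sort A _)

lemma signChanges_extract (chi : Finset Nat -> Bool) {A B : Finset Nat} (h : B ⊆ A) :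
    signChanges ((B.sort (fun a b => a <= b)).map (fun a => chi (A.erase a)))
      ≤ signChanges (delSeq chi A) := by
  rw [delSeq_eq_map]
  exact signChanges_sublist (List.Sublist.map _ (sort_sublist_of_subset h))

-- sorting explicit small sets
lemma sort_pair {x y : Nat} (hxy : x < y) :
    Finset.sort {x, y} (fun a b => a <= b) = [x, y] := by
  rw [Finset.sort_insert]
  · rw [Finset.sort_singleton]
  · intro b hb; rw [Finset.mem_singleton] at hb; omega
  · rw [Finset.mem_singleton]; omega

lemma sort_triple {x y z : Nat} (hxy : x < y) (hyz : y < z) :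
    Finset.sort {x, y, z} (fun a b => a <= b) = [x, y, z] := by
  rw [Finset.sort_insert, sort_pair hyz]
  · intro b hb; simp only [Finset.mem_insert, Finset.mem_singleton] at hb
    rcases hb with rfl | rfl <;> omega
  · simp only [Finset.mem_insert, Finset.mem_singleton]
    push_neg; omega

lemma sort_quad {x y z w : Nat} (hxy : x < y) (hyz : y < z) (hzw : z < w) :
    Finset.sort {x, y, z, w} (fun a b => a <= b) = [x, y, z, w] := by
  rw [Finset.sort_insert, sort_triple hyz hzw]
  · intro b hb; simp only [Finset.mem_insert, Finset.mem_singleton] at hb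
    rcases hb with rfl | rfl | rfl <;> omega
  · simp only [Finset.mem_insert, Finset.mem_singleton]
    push_neg; omega

-- Part 3: pattern lemmas
def HypC (m : Nat) (U : Finset Nat) (chi : Finset Nat -> Bool) : Prop :=
  ∀ A : Finset Nat, A ⊆ U → A.card = m → signChanges (delSeq chi A) ≤ 1

lemma line3 {chi : Finset Nat -> Bool} {U W : Finset Nat} {x y z : Nat} {m : Nat}
    (H : HypC m U chi)
    (hW : W ⊆ U) (hx : x ∈ U) (hy : y ∈ U) (hz : z ∈ U)
    (hxW : x ∉ W) (hyW : y ∉ W) (hzW : z ∉ W)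
    (hxy : x < y) (hyz : y < z) (hcard : W.card + 3 = m) :
    signChanges [chi (insert y (insert z W)), chi (insert x (insert z W)),
      chi (insert x (insert y W))] ≤ 1 := by
  set A : Finset Nat := insert x (insert y (insert z W)) with hA
  have hxyz : x ∉ insert y (insert z W) := by
    simp only [Finset.mem_insert]; push_neg; exact ⟨by omega, by omega, hxW⟩
  have hyzW : y ∉ insert z W := by
    simp only [Finset.mem_insert]; push_neg; exact ⟨by omega, hyW⟩
  have hAsub : A ⊆ U := by
    intro a ha
    simp only [hA, Finset.mem_insert] at ha
    rcases ha with rfl | rfl | rfl | ha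
    exacts [hx, hy, hz, hW ha]
  have hAcard : A.card = m := by
    rw [hA, Finset.card_insert_of_notMem hxyz, Finset.card_insert_of_notMem hyzW,
      Finset.card_insert_of_notMem hzW]
    omega
  have hex : A.erase x = insert y (insert z W) := Finset.erase_insert hxyz
  have hey : A.erase y = insert x (insert z W) := by
    rw [hA, Finset.erase_insert_of_ne (by omega : x ≠ y), Finset.erase_insert hyzW]
  have hez : A.erase z = insert x (insert y W) := by
    rw [hA, Finset.erase_insert_of_ne (by omega : x ≠ z),
      Finset.erase_insert_of_ne (by omega : y ≠ z), Finset.erase_insert hzW]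
  have hBA : ({x, y, z} : Finset Nat) ⊆ A := by
    intro a ha
    simp only [Finset.mem_insert, Finset.mem_singleton] at ha
    rcases ha with rfl | rfl | rfl <;> simp [hA, Finset.mem_insert]
  have h1 := signChanges_extract chi hBA
  rw [sort_triple hxy hyz] at h1
  simp only [List.map_cons, List.map_nil, hex, hey, hez] at h1
  exact le_trans h1 (H A hAsub hAcard)

lemma quad4 {chi : Finset Nat -> Bool} {U W : Finset Nat} {x y z w : Nat} {m : Nat}
    (H : HypC m U chi)
    (hW : W ⊆ U) (hx : x ∈ U) (hy : y ∈ U) (hz : z ∈ U) (hw : w ∈ U)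
    (hxW : x ∉ W) (hyW : y ∉ W) (hzW : z ∉ W) (hwW : w ∉ W)
    (hxy : x < y) (hyz : y < z) (hzw : z < w) (hcard : W.card + 4 = m) :
    signChanges [chi (insert y (insert z (insert w W))),
      chi (insert x (insert z (insert w W))),
      chi (insert x (insert y (insert w W))),
      chi (insert x (insert y (insert z W)))] ≤ 1 := by
  set A : Finset Nat := insert x (insert y (insert z (insert w W))) with hA
  have h4 : w ∉ W := hwW
  have h3 : z ∉ insert w W := by
    simp only [Finset.mem_insert]; push_neg; exact ⟨by omega, hzW⟩
  have h2 : y ∉ insert z (insert w W) := by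
    simp only [Finset.mem_insert]; push_neg; exact ⟨by omega, by omega, hyW⟩
  have h1' : x ∉ insert y (insert z (insert w W)) := by
    simp only [Finset.mem_insert]; push_neg; exact ⟨by omega, by omega, by omega, hxW⟩
  have hAsub : A ⊆ U := by
    intro a ha
    simp only [hA, Finset.mem_insert] at ha
    rcases ha with rfl | rfl | rfl | rfl | ha
    exacts [hx, hy, hz, hw, hW ha]
  have hAcard : A.card = m := by
    rw [hA, Finset.card_insert_of_notMem h1', Finset.card_insert_of_notMem h2,
      Finset.card_insert_of_notMem h3, Finset.card_insert_of_notMem h4]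
    omega
  have hex : A.erase x = insert y (insert z (insert w W)) := Finset.erase_insert h1'
  have hey : A.erase y = insert x (insert z (insert w W)) := by
    rw [hA, Finset.erase_insert_of_ne (by omega : x ≠ y), Finset.erase_insert h2]
  have hez : A.erase z = insert x (insert y (insert w W)) := by
    rw [hA, Finset.erase_insert_of_ne (by omega : x ≠ z),
      Finset.erase_insert_of_ne (by omega : y ≠ z), Finset.erase_insert h3]
  have hew : A.erase w = insert x (insert y (insert z W)) := by
    rw [hA, Finset.erase_insert_of_ne (by omega : x ≠ w),
      Finset.erase_insert_of_ne (by omega : y ≠ w),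
      Finset.erase_insert_of_ne (by omega : z ≠ w), Finset.erase_insert h4]
  have hBA : ({x, y, z, w} : Finset Nat) ⊆ A := by
    intro a ha
    simp only [Finset.mem_insert, Finset.mem_singleton] at ha
    rcases ha with rfl | rfl | rfl | rfl <;> simp [hA, Finset.mem_insert]
  have hE := signChanges_extract chi hBA
  rw [sort_quad hxy hyz hzw] at hE
  simp only [List.map_cons, List.map_nil, hex, hey, hez, hew] at hE
  exact le_trans hE (H A hAsub hAcard)

-- Part 4: grids
def entries {k : Nat} (v : Fin k -> Nat) : Finset Nat := Finset.image v Finset.univ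

def BSep {k : Nat} (S : Fin k -> Finset Nat) : Prop :=
  ∀ i j : Fin k, i < j -> ∀ x ∈ S i, ∀ y ∈ S j, x < y

def InGrid {k : Nat} (S : Fin k -> Finset Nat) (v : Fin k -> Nat) : Prop := ∀ i, v i ∈ S i

def Sink {k : Nat} (chi : Finset Nat -> Bool) (S : Fin k -> Finset Nat)
    (v : Fin k -> Nat) : Prop :=
  InGrid S v ∧ ∀ i : Fin k, ∀ b ∈ S i, b ≠ v i →
    ((b < v i → chi (insert b (entries v)) = true) ∧
     (v i < b → chi (insert b (entries v)) = false))

lemma mem_entries {k : Nat} {v : Fin k -> Nat} {x : Nat} :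
    x ∈ entries v ↔ ∃ i, v i = x := by
  simp [entries]

lemma grid_ne {k : Nat} {S : Fin k -> Finset Nat} (hsep : BSep S) {v : Fin k -> Nat}
    (hv : InGrid S v) {i j : Fin k} (hij : i ≠ j) : v i ≠ v j := by
  rcases lt_or_gt_of_ne hij with h | h
  · exact Nat.ne_of_lt (hsep i j h _ (hv i) _ (hv j))
  · exact (Nat.ne_of_lt (hsep j i h _ (hv j) _ (hv i))).symm

lemma entries_card {k : Nat} {S : Fin k -> Finset Nat} (hsep : BSep S) {v : Fin k -> Nat}
    (hv : InGrid S v) : (entries v).card = k := by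
  rw [entries, Finset.card_image_of_injective _ (fun i j hij => ?_), Finset.card_univ,
    Fintype.card_fin]
  by_contra hne
  exact grid_ne hsep hv hne hij

lemma entries_subset {k : Nat} {S : Fin k -> Finset Nat} {v : Fin k -> Nat}
    (hv : InGrid S v) : entries v ⊆ Finset.univ.biUnion S := by
  intro x hx
  rcases mem_entries.mp hx with ⟨i, rfl⟩
  exact Finset.mem_biUnion.mpr ⟨i, Finset.mem_univ i, hv i⟩

lemma entries_update {k : Nat} {S : Fin k -> Finset Nat} (hsep : BSep S) {v : Fin k -> Nat}
    (hv : InGrid S v) (i : Fin k) (b : Nat) :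
    entries (Function.update v i b) = insert b ((entries v).erase (v i)) := by
  ext x
  rw [mem_entries, Finset.mem_insert, Finset.mem_erase, mem_entries]
  constructor
  · rintro ⟨j, rfl⟩
    rcases eq_or_ne j i with rfl | hji
    · left; rw [Function.update_self]
    · right
      rw [Function.update_of_ne hji]
      exact ⟨grid_ne hsep hv hji, ⟨j, rfl⟩⟩
  · rintro (rfl | ⟨hxi, hx⟩)
    · exact ⟨i, Function.update_self i x v⟩
    · rcases hx with ⟨j, rfl⟩
      have hji : j ≠ i := fun h => hxi (h ▸ rfl)
      exact ⟨j, Function.update_of_ne hji _ _⟩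

lemma insert_entries_update {k : Nat} {S : Fin k -> Finset Nat} (hsep : BSep S)
    {v : Fin k -> Nat} (hv : InGrid S v) (i : Fin k) (b : Nat) :
    insert (v i) (entries (Function.update v i b)) = insert b (entries v) := by
  rw [entries_update hsep hv, Finset.insert_comm,
    Finset.insert_erase (mem_entries.mpr ⟨i, rfl⟩)]

lemma hypC_mono {m : Nat} {U U' : Finset Nat} {chi : Finset Nat -> Bool}
    (h : HypC m U chi) (hU : U' ⊆ U) : HypC m U' chi :=
  fun A hA hcard => h A (hA.trans hU) hcard

lemma hypC_freeze {m : Nat} {U U' : Finset Nat} {chi : Finset Nat -> Bool} {d : Nat}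
    (H : HypC (m + 1) U chi) (hU' : U' ⊆ U) (hd : d ∈ U) (hdU' : d ∉ U') :
    HypC m U' (fun X => chi (insert d X)) := by
  intro A hA hcard
  have hdA : d ∉ A := fun h => hdU' (hA h)
  have h1 : delSeq (fun X => chi (insert d X)) A
      = (A.sort (fun a b => a <= b)).map (fun a => chi ((insert d A).erase a)) := by
    rw [delSeq_eq_map]
    apply List.map_congr_left
    intro a ha
    rw [Finset.mem_sort] at ha
    have had : d ≠ a := fun h => hdA (h ▸ ha)
    rw [Finset.erase_insert_of_ne had]
  have h2 := signChanges_extract chi (Finset.subset_insert d A)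
  rw [h1]
  refine le_trans h2 (H (insert d A) ?_ ?_)
  · intro x hx
    rcases Finset.mem_insert.mp hx with rfl | hx
    exacts [hd, hU' (hA hx)]
  · rw [Finset.card_insert_of_notMem hdA, hcard]

-- bool pattern helpers
lemma bool3a : ∀ a p b : Bool, signChanges [a, p, b] ≤ 1 → a = true → b = true → p = true := by
  decide

lemma bool3b : ∀ p a b : Bool, signChanges [p, a, b] ≤ 1 → a = true → b = false → p = true := by
  decide

lemma bool4 : ∀ p q r s : Bool, signChanges [p, q, r, s] ≤ 1 → p ≠ q → r = q ∧ s = q := by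
  decide

-- Part 5: MIN and B lemmas
lemma blocks_ne {k : Nat} {S : Fin k -> Finset Nat} (hsep : BSep S) {i j : Fin k}
    (hij : i ≠ j) {x y : Nat} (hx : x ∈ S i) (hy : y ∈ S j) : x ≠ y := by
  rcases lt_or_gt_of_ne hij with h | h
  · exact Nat.ne_of_lt (hsep i j h _ hx _ hy)
  · exact (Nat.ne_of_lt (hsep j i h _ hy _ hx)).symm

lemma bsep_of_subset {k : Nat} {S P : Fin k -> Finset Nat} (hsep : BSep S)
    (h : ∀ i, P i ⊆ S i) : BSep P :=
  fun i j hij x hx y hy => hsep i j hij x (h i hx) y (h j hy)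

lemma bool_fe {b : Bool} (h1 : b = false) (h2 : b = true) : False := by
  rw [h1] at h2; exact Bool.noConfusion h2

lemma minLemma {k : Nat}
    (HA : ∀ (S' : Fin k -> Finset Nat) (chi' : Finset Nat -> Bool), BSep S' →
      (∀ i, (S' i).Nonempty) → HypC (k + 2) (Finset.univ.biUnion S') chi' →
      ∃! w, Sink chi' S' w)
    {S : Fin k -> Finset Nat} {chi : Finset Nat -> Bool} {c c' e : Nat}
    (hsep : BSep S) (hne : ∀ i, (S i).Nonempty) (hcc' : c < c')
    (habove : ∀ x ∈ Finset.univ.biUnion S, x < c)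
    (he : e = c ∨ e = c')
    (H : HypC (k + 3) (insert c (insert c' (Finset.univ.biUnion S))) chi)
    {v : Fin k -> Nat} (hv : Sink (fun X => chi (insert e X)) S v) :
    ∀ u : Fin k -> Nat, InGrid S u → chi (insert c (insert c' (entries u))) = false →
      chi (insert c (insert c' (entries v))) = false := by
  set U' : Finset Nat := insert c (insert c' (Finset.univ.biUnion S)) with hU'
  have hmemU' : ∀ x ∈ Finset.univ.biUnion S, x ∈ U' := by
    intro x hx; exact Finset.mem_insert_of_mem (Finset.mem_insert_of_mem hx)
  have hcU' : c ∈ U' := Finset.mem_insert_self _ _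
  have hc'U' : c' ∈ U' := Finset.mem_insert_of_mem (Finset.mem_insert_self _ _)
  have heU' : e ∈ U' := by rcases he with rfl | rfl; exacts [hcU', hc'U']
  have hec : c ≤ e := by rcases he with rfl | rfl; exacts [le_refl _, Nat.le_of_lt hcc']
  suffices hmain : ∀ n : Nat, ∀ u : Fin k -> Nat, InGrid S u →
      chi (insert c (insert c' (entries u))) = false →
      (Finset.univ.filter (fun j => u j ≠ v j)).card ≤ n →
      chi (insert c (insert c' (entries v))) = false by
    intro u hu hfu
    exact hmain _ u hu hfu le_rfl
  intro n
  induction n with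
  | zero =>
    intro u hu hfu hcard
    have hforall : ∀ j, u j = v j := by
      intro j
      by_contra hj
      have : j ∈ Finset.univ.filter (fun j => u j ≠ v j) := by
        simp [Finset.mem_filter, hj]
      have := Finset.card_pos.mpr ⟨j, this⟩
      omega
    have : u = v := funext hforall
    rwa [this] at hfu
  | succ n ih =>
    intro u hu hfu hcard
    by_cases huv : u = v
    · rwa [huv] at hfu
    -- set up the two-point subgrid
    set P : Fin k -> Finset Nat := fun i => ({u i, v i} : Finset Nat) with hP
    have hPsub : ∀ i, P i ⊆ S i := by
      intro i x hx
      rcases Finset.mem_insert.mp hx with rfl | hx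
      · exact hu i
      · rw [Finset.mem_singleton] at hx; exact hx ▸ hv.1 i
    have hPsep : BSep P := bsep_of_subset hsep hPsub
    have hPne : ∀ i, (P i).Nonempty := fun i => ⟨u i, Finset.mem_insert_self _ _⟩
    have hPU : Finset.univ.biUnion P ⊆ Finset.univ.biUnion S := by
      intro x hx
      rcases Finset.mem_biUnion.mp hx with ⟨i, _, hxi⟩
      exact Finset.mem_biUnion.mpr ⟨i, Finset.mem_univ i, hPsub i hxi⟩
    have hHP : HypC (k + 2) (Finset.univ.biUnion P) (fun X => chi (insert e X)) := by
      apply hypC_freeze (m := k + 2) H (hPU.trans (fun x hx => hmemU' x hx)) heU'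
      intro hx
      have := habove e (hPU hx)
      omega
    obtain ⟨vP, hvPsink, hvPuniq⟩ := HA P (fun X => chi (insert e X)) hPsep hPne hHP
    have hvsinkP : Sink (fun X => chi (insert e X)) P v := by
      refine ⟨fun i => by simp [hP], fun i b hb hbne => hv.2 i b (hPsub i hb) hbne⟩
    have hveq : v = vP := hvPuniq v hvsinkP
    have hUInGridP : InGrid P u := fun i => Finset.mem_insert_self _ _
    have hnosink : ¬ Sink (fun X => chi (insert e X)) P u := by
      intro hs
      exact huv (by rw [hvPuniq u hs, hveq])
    have h2 : ¬ (∀ i : Fin k, ∀ b ∈ P i, b ≠ u i →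
        ((b < u i → chi (insert e (insert b (entries u))) = true) ∧
         (u i < b → chi (insert e (insert b (entries u))) = false))) := by
      intro hall
      exact hnosink ⟨hUInGridP, hall⟩
    obtain ⟨i, hi⟩ := not_forall.mp h2
    obtain ⟨b, hb⟩ := not_forall.mp hi
    obtain ⟨hbP, hb2⟩ := Classical.not_imp.mp hb
    obtain ⟨hbne, hbad⟩ := Classical.not_imp.mp hb2
    have hbv : b = v i := by
      rcases Finset.mem_insert.mp hbP with rfl | hb
      · exact absurd rfl hbne
      · exact Finset.mem_singleton.mp hb
    subst hbv
    have hne_i : u i ≠ v i := fun h => hbne h.symm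
    set X := chi (insert e (insert (v i) (entries u))) with hX
    have hout : (v i < u i ∧ X = false) ∨ (u i < v i ∧ X = true) := by
      rcases Nat.lt_trichotomy (v i) (u i) with h | h | h
      · left
        refine ⟨h, ?_⟩
        rcases Bool.eq_false_or_eq_true X with hXv | hXv
        · exact (hbad ⟨fun _ => hXv, fun hgt => absurd hgt (by omega)⟩).elim
        · exact hXv
      · exact absurd h.symm hne_i
      · right
        refine ⟨h, ?_⟩
        rcases Bool.eq_false_or_eq_true X with hXv | hXv
        · exact hXv
        · exact (hbad ⟨fun hlt => absurd hlt (by omega), fun _ => hXv⟩).elim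
    set w := Function.update u i (v i) with hw
    have hk1 : 0 < k := i.pos
    set W := (entries u).erase (u i) with hWdef
    have huiE : u i ∈ entries u := mem_entries.mpr ⟨i, rfl⟩
    have hentU : entries u = insert (u i) W := (Finset.insert_erase huiE).symm
    have hentW : entries w = insert (v i) W := entries_update hsep hu i (v i)
    have hWcard : W.card = k - 1 := by
      rw [hWdef, Finset.card_erase_of_mem huiE, entries_card hsep hu]
    have hWsubU : W ⊆ Finset.univ.biUnion S :=
      (Finset.erase_subset _ _).trans (entries_subset hu)
    have hWsub : W ⊆ U' := fun x hx => hmemU' x (hWsubU hx)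
    have huiU : u i ∈ U' := hmemU' _ (Finset.mem_biUnion.mpr ⟨i, Finset.mem_univ i, hu i⟩)
    have hviU : v i ∈ U' := hmemU' _ (Finset.mem_biUnion.mpr ⟨i, Finset.mem_univ i, hv.1 i⟩)
    have huiW : u i ∉ W := Finset.notMem_erase _ _
    have hviW : v i ∉ W := by
      intro hvw
      have hvE : v i ∈ entries u := (Finset.erase_subset _ _) hvw
      rcases mem_entries.mp hvE with ⟨j, hj⟩
      rcases eq_or_ne j i with rfl | hji
      · exact (Finset.mem_erase.mp hvw).1 hj.symm
      · exact blocks_ne hsep hji (hu j) (hv.1 i) hj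
    have hcW : c ∉ W := fun hx => absurd (habove c (hWsubU hx)) (by omega)
    have hc'W : c' ∉ W := fun hx => absurd (habove c' (hWsubU hx)) (by omega)
    have huic : u i < c := habove _ (Finset.mem_biUnion.mpr ⟨i, Finset.mem_univ i, hu i⟩)
    have hvic : v i < c := habove _ (Finset.mem_biUnion.mpr ⟨i, Finset.mem_univ i, hv.1 i⟩)
    have hWcard4 : W.card + 4 = k + 3 := by omega
    have hfw : chi (insert c (insert c' (entries w))) = false := by
      rcases Bool.eq_false_or_eq_true (chi (insert c (insert c' (entries w)))) with hfwv | hfwv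
      swap
      · exact hfwv
      exfalso
      have E3 : ∀ (a bb : Nat), insert a (insert bb (insert c' W))
          = insert c' (insert a (insert bb W)) := by
        intro a bb; rw [Finset.insert_comm bb c', Finset.insert_comm a c']
      have E4 : ∀ (a bb : Nat), insert a (insert bb (insert c W))
          = insert c (insert a (insert bb W)) := by
        intro a bb; rw [Finset.insert_comm bb c, Finset.insert_comm a c]
      have E1 : ∀ (a : Nat), insert a (insert c (insert c' W))
          = insert c (insert c' (insert a W)) := by
        intro a; rw [Finset.insert_comm a c, Finset.insert_comm a c']
      rcases hout with ⟨hlt, hXf⟩ | ⟨hlt, hXt⟩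
      · -- v i < u i, X = false
        have q := quad4 (x := v i) (y := u i) (z := c) (w := c') H hWsub hviU huiU hcU' hc'U'
          hviW huiW hcW hc'W hlt huic hcc' hWcard4
        rw [E1 (u i), E1 (v i), E3 (v i) (u i), E4 (v i) (u i)] at q
        rw [← hentU, ← hentW] at q
        rw [hfu, hfwv] at q
        have hb4 := bool4 _ _ _ _ q (by simp)
        rcases he with rfl | rfl
        · exact bool_fe (hXf : chi (insert e (insert (v i) (entries u))) = false) hb4.2
        · exact bool_fe (hXf : chi (insert e (insert (v i) (entries u))) = false) hb4.1
      · -- u i < v i, X = true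
        have q := quad4 (x := u i) (y := v i) (z := c) (w := c') H hWsub huiU hviU hcU' hc'U'
          huiW hviW hcW hc'W hlt hvic hcc' hWcard4
        rw [E1 (u i), E1 (v i), E3 (u i) (v i), E4 (u i) (v i)] at q
        rw [← hentU, ← hentW] at q
        rw [hfu, hfwv] at q
        have hb4 := bool4 _ _ _ _ q (by simp)
        have h3' : insert (u i) (entries w) = insert (v i) (entries u) := by
          rw [hentW, Finset.insert_comm, ← hentU]
        rw [h3'] at hb4
        rcases he with rfl | rfl
        · exact bool_fe hb4.2 (hXt : chi (insert e (insert (v i) (entries u))) = true)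
        · exact bool_fe hb4.1 (hXt : chi (insert e (insert (v i) (entries u))) = true)
    have hwin : InGrid S w := by
      intro j
      rcases eq_or_ne j i with rfl | hji
      · rw [hw, Function.update_self]; exact hv.1 j
      · rw [hw, Function.update_of_ne hji]; exact hu j
    have hifilter : i ∈ Finset.univ.filter (fun j => u j ≠ v j) := by
      simp [Finset.mem_filter, hne_i]
    have hfilter : Finset.univ.filter (fun j => w j ≠ v j)
        = (Finset.univ.filter (fun j => u j ≠ v j)).erase i := by
      ext j
      simp only [Finset.mem_filter, Finset.mem_erase, Finset.mem_univ, true_and]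
      constructor
      · intro hj
        rcases eq_or_ne j i with rfl | hji
        · rw [hw, Function.update_self] at hj; exact absurd rfl hj
        · rw [hw, Function.update_of_ne hji] at hj; exact ⟨hji, hj⟩
      · rintro ⟨hji, hj⟩
        rw [hw, Function.update_of_ne hji]; exact hj
    have hcard' : (Finset.univ.filter (fun j => w j ≠ v j)).card ≤ n := by
      rw [hfilter, Finset.card_erase_of_mem hifilter]
      have := Finset.card_pos.mpr ⟨i, hifilter⟩
      omega
    exact ih w hwin hfw hcard'

lemma bLemma {k : Nat}
    (HA : ∀ (S' : Fin k -> Finset Nat) (chi' : Finset Nat -> Bool), BSep S' →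
      (∀ i, (S' i).Nonempty) → HypC (k + 2) (Finset.univ.biUnion S') chi' →
      ∃! w, Sink chi' S' w)
    {S : Fin k -> Finset Nat} {chi : Finset Nat -> Bool} {c c' : Nat}
    (hsep : BSep S) (hne : ∀ i, (S i).Nonempty) (hcc' : c < c')
    (habove : ∀ x ∈ Finset.univ.biUnion S, x < c)
    (H : HypC (k + 3) (insert c (insert c' (Finset.univ.biUnion S))) chi)
    {v v' : Fin k -> Nat} (hv : Sink (fun X => chi (insert c X)) S v)
    (hv' : Sink (fun X => chi (insert c' X)) S v') :
    chi (insert c (insert c' (entries v))) = chi (insert c (insert c' (entries v'))) := by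
  rcases Bool.eq_false_or_eq_true (chi (insert c (insert c' (entries v)))) with h | h
  · rcases Bool.eq_false_or_eq_true (chi (insert c (insert c' (entries v')))) with h' | h'
    · rw [h, h']
    · rw [minLemma HA hsep hne hcc' habove (Or.inl rfl) H hv v' hv'.1 h'] at h
      simp at h
  · rw [h]
    exact (minLemma HA hsep hne hcc' habove (Or.inr rfl) H hv' v hv.1 h).symm

-- Part 6: slices
lemma entries_snoc {k : Nat} (v₀ : Fin k -> Nat) (d : Nat) :
    entries (Fin.snoc v₀ d : Fin (k + 1) -> Nat) = insert d (entries v₀) := by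
  ext x
  rw [mem_entries, Finset.mem_insert, mem_entries]
  constructor
  · rintro ⟨i, rfl⟩
    rcases Fin.eq_castSucc_or_eq_last i with ⟨j, rfl⟩ | rfl
    · right; exact ⟨j, by simp⟩
    · left; rw [Fin.snoc_last]
  · rintro (rfl | ⟨j, rfl⟩)
    · exact ⟨Fin.last k, by simp⟩
    · exact ⟨j.castSucc, by simp⟩

lemma slice_restrict {k : Nat} {S : Fin (k + 1) -> Finset Nat} {chi : Finset Nat -> Bool}
    {v : Fin (k + 1) -> Nat} (hsink : Sink chi S v) :
    Sink (fun X => chi (insert (v (Fin.last k)) X)) (fun j : Fin k => S j.castSucc)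
      (Fin.init v) := by
  have hent := entries_snoc (Fin.init v) (v (Fin.last k))
  rw [Fin.snoc_init_self] at hent
  refine ⟨fun j => hsink.1 j.castSucc, fun j b hb hbne => ?_⟩
  have h2 := hsink.2 j.castSucc b hb hbne
  rwa [show insert b (entries v)
      = insert (v (Fin.last k)) (insert b (entries (Fin.init v))) from by
    rw [hent, Finset.insert_comm]] at h2

lemma slice_assemble {k : Nat} {S : Fin (k + 1) -> Finset Nat} {chi : Finset Nat -> Bool}
    {v₀ : Fin k -> Nat} {d : Nat} (hd : d ∈ S (Fin.last k))
    (h0 : Sink (fun X => chi (insert d X)) (fun j : Fin k => S j.castSucc) v₀)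
    (hlast : ∀ b ∈ S (Fin.last k), b ≠ d →
      (b < d → chi (insert b (insert d (entries v₀))) = true) ∧
      (d < b → chi (insert b (insert d (entries v₀))) = false)) :
    Sink chi S (Fin.snoc v₀ d) := by
  have hent := entries_snoc v₀ d
  constructor
  · intro i
    refine Fin.lastCases ?_ ?_ i
    · rw [Fin.snoc_last]; exact hd
    · intro j; rw [Fin.snoc_castSucc]; exact h0.1 j
  · intro i
    refine Fin.lastCases ?_ ?_ i
    · intro b hb hbne
      rw [Fin.snoc_last] at hbne ⊢
      rw [hent]
      exact hlast b hb hbne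
    · intro j b hb hbne
      rw [Fin.snoc_castSucc] at hbne ⊢
      have h2 := h0.2 j b hb hbne
      rwa [show insert b (entries (Fin.snoc v₀ d : Fin (k + 1) -> Nat))
          = insert d (insert b (entries v₀)) from by
        rw [hent, Finset.insert_comm]]

lemma slice_sep {k : Nat} {S : Fin (k + 1) -> Finset Nat} (hsep : BSep S) :
    BSep (fun j : Fin k => S j.castSucc) :=
  fun i j hij x hx y hy =>
    hsep i.castSucc j.castSucc (by simpa using hij) x hx y hy

lemma slice_biUnion_subset {k : Nat} (S : Fin (k + 1) -> Finset Nat) :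
    Finset.univ.biUnion (fun j : Fin k => S j.castSucc) ⊆ Finset.univ.biUnion S := by
  intro x hx
  rcases Finset.mem_biUnion.mp hx with ⟨j, _, hxj⟩
  exact Finset.mem_biUnion.mpr ⟨j.castSucc, Finset.mem_univ _, hxj⟩

lemma slice_above {k : Nat} {S : Fin (k + 1) -> Finset Nat} (hsep : BSep S) {d : Nat}
    (hd : d ∈ S (Fin.last k)) :
    ∀ x ∈ Finset.univ.biUnion (fun j : Fin k => S j.castSucc), x < d := by
  intro x hx
  rcases Finset.mem_biUnion.mp hx with ⟨j, _, hxj⟩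
  exact hsep j.castSucc (Fin.last k) (Fin.castSucc_lt_last j) x hxj d hd

lemma slice_not_mem {k : Nat} {S : Fin (k + 1) -> Finset Nat} (hsep : BSep S) {d : Nat}
    (hd : d ∈ S (Fin.last k)) :
    d ∉ Finset.univ.biUnion (fun j : Fin k => S j.castSucc) := by
  intro hmem
  exact absurd (slice_above hsep hd d hmem) (by omega)

-- Part 7: main theorem (abstract form)
theorem mainA : ∀ (k : Nat) (S : Fin k -> Finset Nat) (chi : Finset Nat -> Bool),
    BSep S → (∀ i, (S i).Nonempty) → HypC (k + 2) (Finset.univ.biUnion S) chi →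
    ∃! v, Sink chi S v := by
  intro k
  induction k with
  | zero =>
    intro S chi _ _ _
    refine ⟨fun i => 0, ⟨fun i => i.elim0, fun i => i.elim0⟩, fun w _ => funext fun i => i.elim0⟩
  | succ k ihk =>
    suffices key : ∀ (m : Nat) (S : Fin (k + 1) -> Finset Nat) (chi : Finset Nat -> Bool),
        (S (Fin.last k)).card ≤ m → BSep S → (∀ i, (S i).Nonempty) →
        HypC (k + 3) (Finset.univ.biUnion S) chi → ∃! v, Sink chi S v by
      intro S chi hsep hne H
      exact key (S (Fin.last k)).card S chi le_rfl hsep hne H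
    intro m
    induction m with
    | zero =>
      intro S chi hcard hsep hne H
      have := Finset.card_pos.mpr (hne (Fin.last k))
      omega
    | succ m ihm =>
      intro S chi hcard hsep hne H
      set SZ : Fin k -> Finset Nat := fun j => S j.castSucc with hSZ
      have hSZsep : BSep SZ := slice_sep hsep
      have hSZne : ∀ j, (SZ j).Nonempty := fun j => hne _
      have hUZ : Finset.univ.biUnion SZ ⊆ Finset.univ.biUnion S := slice_biUnion_subset S
      have hmemU : ∀ d ∈ S (Fin.last k), d ∈ Finset.univ.biUnion S :=
        fun d hd => Finset.mem_biUnion.mpr ⟨Fin.last k, Finset.mem_univ _, hd⟩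
      have hsliceHyp : ∀ d ∈ S (Fin.last k),
          HypC (k + 2) (Finset.univ.biUnion SZ) (fun X => chi (insert d X)) :=
        fun d hd => hypC_freeze (m := k + 2) H hUZ (hmemU d hd) (slice_not_mem hsep hd)
      have sliceSink : ∀ d ∈ S (Fin.last k),
          ∃! v₀, Sink (fun X => chi (insert d X)) SZ v₀ :=
        fun d hd => ihk SZ (fun X => chi (insert d X)) hSZsep hSZne (hsliceHyp d hd)
      have hBH : ∀ {c c' : Nat}, c ∈ S (Fin.last k) → c' ∈ S (Fin.last k) →
          HypC (k + 3) (insert c (insert c' (Finset.univ.biUnion SZ))) chi := by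
        intro c c' hc hc'
        apply hypC_mono H
        intro x hx
        rcases Finset.mem_insert.mp hx with rfl | hx
        · exact hmemU x hc
        rcases Finset.mem_insert.mp hx with rfl | hx
        · exact hmemU x hc'
        exact hUZ hx
      have hBapp : ∀ c c' : Nat, c ∈ S (Fin.last k) → c' ∈ S (Fin.last k) → c < c' →
          ∀ v₀ v₀' : Fin k -> Nat, Sink (fun X => chi (insert c X)) SZ v₀ →
            Sink (fun X => chi (insert c' X)) SZ v₀' →
            chi (insert c (insert c' (entries v₀))) = chi (insert c (insert c' (entries v₀'))) :=
        fun c c' hc hc' hcc' v₀ v₀' hv₀ hv₀' =>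
          bLemma ihk hSZsep hSZne hcc' (slice_above hsep hc) (hBH hc hc') hv₀ hv₀'
      -- entries of slice sinks avoid last-block elements
      have hEntZ : ∀ (x₀ : Fin k -> Nat), InGrid SZ x₀ → ∀ d ∈ S (Fin.last k),
          d ∉ entries x₀ := by
        intro x₀ hx₀ d hd hdmem
        exact absurd (slice_above hsep hd d (entries_subset hx₀ hdmem)) (by omega)
      by_cases hc1 : (S (Fin.last k)).card = 1
      · -- base: singleton last block
        obtain ⟨d, hTd⟩ := Finset.card_eq_one.mp hc1
        have hd : d ∈ S (Fin.last k) := by rw [hTd]; exact Finset.mem_singleton_self d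
        obtain ⟨v₀, hv₀, hv₀u⟩ := sliceSink d hd
        refine ⟨Fin.snoc v₀ d, ?_, ?_⟩
        · refine slice_assemble hd hv₀ (fun b hb hbne => ?_)
          rw [hTd] at hb
          exact absurd (Finset.mem_singleton.mp hb) hbne
        · intro w hw
          have hwl : w (Fin.last k) = d := by
            have := hw.1 (Fin.last k); rw [hTd] at this; exact Finset.mem_singleton.mp this
          have hrw := slice_restrict hw
          rw [hwl] at hrw
          have hinit : Fin.init w = v₀ := hv₀u _ hrw
          rw [← hinit, ← hwl]
          exact (Fin.snoc_init_self w).symm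
      · -- step: remove the max of the last block
        have hc2 : 2 ≤ (S (Fin.last k)).card := by
          have := Finset.card_pos.mpr (hne (Fin.last k)); omega
        set T : Finset Nat := S (Fin.last k) with hT
        have hTne : T.Nonempty := hne (Fin.last k)
        set c' : Nat := T.max' hTne with hc'def
        have hc'T : c' ∈ T := T.max'_mem hTne
        set T' : Finset Nat := T.erase c' with hT'
        have hT'card : T'.card = T.card - 1 := Finset.card_erase_of_mem hc'T
        have hT'ne : T'.Nonempty := Finset.card_pos.mp (by omega)
        set S' : Fin (k + 1) -> Finset Nat := Function.update S (Fin.last k) T' with hS'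
        have hS'last : S' (Fin.last k) = T' := Function.update_self _ _ _
        have hS'sub : ∀ i, S' i ⊆ S i := by
          intro i
          rcases eq_or_ne i (Fin.last k) with rfl | hil
          · rw [hS'last, ← hT]; exact Finset.erase_subset _ _
          · rw [hS', Function.update_of_ne hil]
        have hS'sep : BSep S' := bsep_of_subset hsep hS'sub
        have hS'ne : ∀ i, (S' i).Nonempty := by
          intro i
          rcases eq_or_ne i (Fin.last k) with rfl | hil
          · rw [hS'last]; exact hT'ne
          · rw [hS', Function.update_of_ne hil]; exact hne i
        have hS'U : Finset.univ.biUnion S' ⊆ Finset.univ.biUnion S := by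
          intro x hx
          rcases Finset.mem_biUnion.mp hx with ⟨i, _, hxi⟩
          exact Finset.mem_biUnion.mpr ⟨i, Finset.mem_univ _, hS'sub i hxi⟩
        have hS'card : (S' (Fin.last k)).card ≤ m := by rw [hS'last]; omega
        obtain ⟨u, hu, huU⟩ := ihm S' chi hS'card hS'sep hS'ne (hypC_mono H hS'U)
        have hSZeq : (fun j : Fin k => S' j.castSucc) = SZ :=
          funext fun j => Function.update_of_ne (Fin.castSucc_lt_last j).ne _ _
        set c : Nat := u (Fin.last k) with hcdef
        have hcT' : c ∈ T' := by have := hu.1 (Fin.last k); rwa [hS'last] at this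
        have hcT : c ∈ T := Finset.mem_of_mem_erase hcT'
        have hcne : c ≠ c' := Finset.ne_of_mem_erase hcT'
        have hcc' : c < c' := lt_of_le_of_ne (T.le_max' c hcT) hcne
        have hu₀ : Sink (fun X => chi (insert c X)) SZ (Fin.init u) := by
          have hr := slice_restrict hu
          rwa [hSZeq, ← hcdef] at hr
        obtain ⟨z₀, hz₀, hz₀u⟩ := sliceSink c' hc'T
        have hentu : entries u = insert c (entries (Fin.init u)) := by
          have h := entries_snoc (Fin.init u) (u (Fin.last k))
          rw [Fin.snoc_init_self, ← hcdef] at h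
          exact h
        have hB0 : chi (insert c (insert c' (entries (Fin.init u))))
            = chi (insert c (insert c' (entries z₀))) :=
          hBapp c c' hcT hc'T hcc' _ _ hu₀ hz₀
        by_cases hσ : chi (insert c (insert c' (entries (Fin.init u)))) = true
        · -- the new max is the sink
          have ALLPLUS : ∀ x₀ : Fin k -> Nat, InGrid SZ x₀ →
              chi (insert c (insert c' (entries x₀))) = true := by
            intro x₀ hx₀
            rcases Bool.eq_false_or_eq_true (chi (insert c (insert c' (entries x₀)))) with h | h
            · exact h
            exfalso
            have := minLemma ihk hSZsep hSZne hcc' (slice_above hsep hcT) (Or.inl rfl)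
              (hBH hcT hc'T) hu₀ x₀ hx₀ h
            rw [this] at hσ
            exact Bool.noConfusion hσ
          have lastcond : ∀ b ∈ S (Fin.last k), b ≠ c' →
              (b < c' → chi (insert b (insert c' (entries z₀))) = true) ∧
              (c' < b → chi (insert b (insert c' (entries z₀))) = false) := by
            intro b hb hbne
            have hbc' : b < c' := lt_of_le_of_ne (T.le_max' b hb) hbne
            refine ⟨fun _ => ?_, fun hgt => absurd hgt (by omega)⟩
            rcases eq_or_ne b c with rfl | hbc
            · rw [← hB0]; exact hσ
            obtain ⟨w₀, hw₀, _⟩ := sliceSink b hb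
            have hPlusW : chi (insert c (insert c' (entries w₀))) = true := ALLPLUS w₀ hw₀.1
            have hBbc' : chi (insert b (insert c' (entries w₀)))
                = chi (insert b (insert c' (entries z₀))) :=
              hBapp b c' hb hc'T hbc' _ _ hw₀ hz₀
            rw [← hBbc']
            have hWsub : entries w₀ ⊆ Finset.univ.biUnion S :=
              (entries_subset hw₀.1).trans hUZ
            have hWcard : (entries w₀).card + 3 = k + 3 := by
              rw [entries_card hSZsep hw₀.1]
            rcases Nat.lt_trichotomy b c with hbc2 | hbc2 | hbc2
            · -- b < c
              have hub := (hu.2 (Fin.last k) b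
                (by rw [hS'last]; exact Finset.mem_erase.mpr ⟨hbne, hb⟩)
                (fun h => hbc h)).1 (by rw [← hcdef]; exact hbc2)
              rw [hentu] at hub
              have hBbc : chi (insert b (insert c (entries w₀)))
                  = chi (insert b (insert c (entries (Fin.init u)))) :=
                hBapp b c hb hcT hbc2 _ _ hw₀ hu₀
              have h1 : chi (insert b (insert c (entries w₀))) = true := by
                rw [hBbc]; exact hub
              have hl := line3 (x := b) (y := c) (z := c') H hWsub (hmemU b hb) (hmemU c hcT)
                (hmemU c' hc'T) (hEntZ w₀ hw₀.1 b hb) (hEntZ w₀ hw₀.1 c hcT)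
                (hEntZ w₀ hw₀.1 c' hc'T) hbc2 hcc' hWcard
              exact bool3a _ _ _ hl hPlusW h1
            · exact absurd hbc2 hbc
            · -- c < b
              have hub := (hu.2 (Fin.last k) b
                (by rw [hS'last]; exact Finset.mem_erase.mpr ⟨hbne, hb⟩)
                (fun h => hbc h)).2 (by rw [← hcdef]; exact hbc2)
              rw [hentu] at hub
              have hBcb : chi (insert c (insert b (entries (Fin.init u))))
                  = chi (insert c (insert b (entries w₀))) :=
                hBapp c b hcT hb hbc2 _ _ hu₀ hw₀
              have h1 : chi (insert c (insert b (entries w₀))) = false := by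
                rw [← hBcb, Finset.insert_comm]; exact hub
              have hl := line3 (x := c) (y := b) (z := c') H hWsub (hmemU c hcT) (hmemU b hb)
                (hmemU c' hc'T) (hEntZ w₀ hw₀.1 c hcT) (hEntZ w₀ hw₀.1 b hb)
                (hEntZ w₀ hw₀.1 c' hc'T) hbc2 hbc' hWcard
              exact bool3b _ _ _ hl hPlusW h1
          refine ⟨Fin.snoc z₀ c', slice_assemble hc'T hz₀ lastcond, ?_⟩
          intro w hw
          by_cases hwl : w (Fin.last k) = c'
          · have hrw := slice_restrict hw
            rw [hwl] at hrw
            have hiw : Fin.init w = z₀ := hz₀u _ hrw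
            rw [← hiw, ← hwl]
            exact (Fin.snoc_init_self w).symm
          · exfalso
            have hwS' : Sink chi S' w := by
              refine ⟨fun i => ?_, fun i b hb hbne => hw.2 i b (hS'sub i hb) hbne⟩
              rcases eq_or_ne i (Fin.last k) with rfl | hil
              · rw [hS'last]; exact Finset.mem_erase.mpr ⟨hwl, hw.1 _⟩
              · rw [hS', Function.update_of_ne hil]; exact hw.1 i
            have hwu : w = u := huU w hwS'
            have hcond := (hw.2 (Fin.last k) c' hc'T
              (by rw [hwu, ← hcdef]; exact hcne.symm)).2 (by rw [hwu, ← hcdef]; exact hcc')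
            rw [hwu, hentu, Finset.insert_comm] at hcond
            exact bool_fe hcond hσ
        · -- the old sink remains the sink
          have hσf : chi (insert c (insert c' (entries (Fin.init u)))) = false :=
            Bool.eq_false_iff.mpr hσ
          refine ⟨u, ⟨fun i => hS'sub i (hu.1 i), ?_⟩, ?_⟩
          · intro i b hb hbne
            rcases eq_or_ne i (Fin.last k) with rfl | hil
            · rcases eq_or_ne b c' with rfl | hbc'
              · refine ⟨fun hlt => absurd hlt (by rw [← hcdef]; omega), fun _ => ?_⟩
                rw [hentu, Finset.insert_comm]
                exact hσf
              · exact hu.2 (Fin.last k) b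
                  (by rw [hS'last]; exact Finset.mem_erase.mpr ⟨hbc', hb⟩) hbne
            · exact hu.2 i b (by rw [hS', Function.update_of_ne hil]; exact hb) hbne
          · intro w hw
            by_cases hwl : w (Fin.last k) = c'
            · exfalso
              have hrw := slice_restrict hw
              rw [hwl] at hrw
              have hiw : Fin.init w = z₀ := hz₀u _ hrw
              have hcond := (hw.2 (Fin.last k) c hcT
                (by rw [hwl]; exact hcne)).1 (by rw [hwl]; exact hcc')
              have hentw : entries w = insert c' (entries z₀) := by
                have h := entries_snoc (Fin.init w) (w (Fin.last k))
                rw [Fin.snoc_init_self, hiw, hwl] at h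
                exact h
              rw [hentw, ← hB0] at hcond
              exact bool_fe hσf hcond
            · have hwS' : Sink chi S' w := by
                refine ⟨fun i => ?_, fun i b hb hbne => hw.2 i b (hS'sub i hb) hbne⟩
                rcases eq_or_ne i (Fin.last k) with rfl | hil
                · rw [hS'last]; exact Finset.mem_erase.mpr ⟨hwl, hw.1 _⟩
                · rw [hS', Function.update_of_ne hil]; exact hw.1 i
              exact huU w hwS'

-- Part 8: translation to the required statement
lemma insert_image_update {k : Nat} (v : Fin k -> Nat) (i : Fin k) (b : Nat) :
    insert (v i) (Finset.image (Function.update v i b) Finset.univ)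
      = insert b (Finset.image v Finset.univ) := by
  ext x
  simp only [Finset.mem_insert, Finset.mem_image, Finset.mem_univ, true_and]
  constructor
  · rintro (rfl | ⟨j, rfl⟩)
    · right; exact ⟨i, rfl⟩
    · rcases eq_or_ne j i with rfl | hji
      · left; rw [Function.update_self]
      · right; exact ⟨j, (Function.update_of_ne hji _ _).symm⟩
  · rintro (rfl | ⟨j, rfl⟩)
    · right; exact ⟨i, Function.update_self _ _ _⟩
    · rcases eq_or_ne j i with rfl | hji
      · left; rfl
      · right; exact ⟨j, Function.update_of_ne hji _ _⟩

lemma sink_iff {r : Nat} (chi : Finset Nat -> Bool) (C S : Fin r -> Finset Nat)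
    (hS : ∀ i, S i ⊆ C i) (v : Fin r -> Nat) :
    IsBlockSink chi C S v ↔ Sink chi S v := by
  constructor
  · rintro ⟨hin, hcond⟩
    refine ⟨hin, ?_⟩
    intro i b hb hbne
    set w := Function.update v i b with hwdef
    have hwin : ∀ j, w j ∈ S j := by
      intro j
      rcases eq_or_ne j i with rfl | hji
      · rw [hwdef, Function.update_self]; exact hb
      · rw [hwdef, Function.update_of_ne hji]; exact hin j
    have hadj : NatAdj v w := by
      refine ⟨i, ?_, fun j hj => (Function.update_of_ne hj _ _).symm⟩
      rw [hwdef, Function.update_self]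
      exact fun h => hbne h.symm
    obtain ⟨_, _, i', hagree, hor⟩ := hcond w hwin hadj
    have hii' : i' = i := by
      by_contra hne'
      have h1 : w i' = v i' := Function.update_of_ne (fun h => hne' h) _ _
      rcases hor with ⟨hlt, _⟩ | ⟨hlt, _⟩ <;> omega
    rw [hii'] at hor
    have hkey : insert (v i) (Finset.image w Finset.univ)
        = insert b (Finset.image v Finset.univ) := insert_image_update v i b
    rcases hor with ⟨hlt, hchi⟩ | ⟨hlt, hchi⟩
    · rw [show w i = b from Function.update_self _ _ _] at hlt
      rw [hkey] at hchi
      exact ⟨fun _ => hchi, fun hgt => absurd hgt (by omega)⟩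
    · rw [show w i = b from Function.update_self _ _ _] at hlt
      rw [hkey] at hchi
      exact ⟨fun hlt' => absurd hlt' (by omega), fun _ => hchi⟩
  · rintro ⟨hin, hcond⟩
    refine ⟨hin, ?_⟩
    intro w hwin hadj
    obtain ⟨i, hne', hagree⟩ := hadj
    have hw : w = Function.update v i (w i) := by
      funext j
      rcases eq_or_ne j i with rfl | hji
      · rw [Function.update_self]
      · rw [Function.update_of_ne hji]; exact (hagree j hji).symm
    have hbnev : w i ≠ v i := fun h => hne' h.symm
    have hc := hcond i (w i) (hwin i) hbnev
    refine ⟨fun j => hS j (hwin j), fun j => hS j (hin j), i, fun j hj => (hagree j hj).symm, ?_⟩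
    have hkey := insert_image_update v i (w i)
    rw [← hw] at hkey
    rcases Nat.lt_trichotomy (w i) (v i) with hlt | heq | hgt
    · left; exact ⟨hlt, by rw [hkey]; exact hc.1 hlt⟩
    · exact absurd heq hbnev
    · right; exact ⟨hgt, by rw [hkey]; exact hc.2 hgt⟩


/-- the orientation `O_χ` induced by a block signotope is a unique sink
orientation: every subgrid `S` (with `∅ ≠ S i ⊆ C i`) contains exactly one sink. -/
theorem blockDir_is_USO (n r : Nat) (chi : Finset Nat -> Bool)
    (C : Fin r -> Finset Nat) (hchi : IsSignotopeOn (r + 1) (Finset.Icc 1 n) chi)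
    (hC : IsBlockPartition n r C)
    (S : Fin r -> Finset Nat) (hS : ∀ i, S i ⊆ C i) (hne : ∀ i, (S i).Nonempty) :
    ∃! v : Fin r -> Nat, IsBlockSink chi C S v := by
  have hsep : BSep S := fun i j hij x hx y hy => hC.2 i j hij x (hS i hx) y (hS j hy)
  have hH : HypC (r + 2) (Finset.univ.biUnion S) chi := by
    intro A hA hcard
    refine hchi A ?_ hcard
    intro x hx
    rw [← hC.1]
    rcases Finset.mem_biUnion.mp (hA hx) with ⟨i, _, hxi⟩
    exact Finset.mem_biUnion.mpr ⟨i, Finset.mem_univ _, hS i hxi⟩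
  obtain ⟨v, hv, hvu⟩ := mainA r S chi hsep hne hH
  exact ⟨v, (sink_iff chi C S hS v).mpr hv, fun w hw => hvu w ((sink_iff chi C S hS w).mp hw)⟩
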